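/- For real x > 0, K_0(x) = ∫₀^∞ e^{-2x cosh v} dv satisfies K_0(x) < √(π/(4x)) · e^{-2x}. -/

import Mathlib

open Real MeasureTheory

lemma quad_lt_cosh {v : ℝ} (hv : 0 < v) : 1 + v ^ 2 / 2 < Real.cosh v := by
  have h : StrictMonoOn (fun t => Real.cosh t - (1 + t ^ 2 / 2)) (Set.Ici 0) := by
    apply strictMonoOn_of_deriv_pos (convex_Ici 0)
    · fun_prop
    · intro t ht
      rw [interior_Ici] at ht
      have hd : HasDerivAt (fun t => Real.cosh t - (1 + t ^ 2 / 2)) (Real.sinh t - t) t := by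
        have h1 := Real.hasDerivAt_cosh t
        have h2 : HasDerivAt (fun t : ℝ => 1 + t ^ 2 / 2) t t := by
          simpa using ((hasDerivAt_pow 2 t).div_const 2).const_add 1
        exact h1.sub h2
      rw [hd.deriv]
      simpa using (Real.self_lt_sinh_iff.mpr ht)
  have := h (Set.self_mem_Ici) (Set.mem_Ici.mpr hv.le) hv
  simp at this
  linarith

theorem K0_upper_bound (x : ℝ) (hx : 0 < x) :
    (∫ v in Set.Ioi (0:ℝ), Real.exp (-2 * x * Real.cosh v)) <
      Real.sqrt (π / (4 * x)) * Real.exp (-2 * x) := by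
  set f := fun v : ℝ => Real.exp (-2 * x * Real.cosh v)
  set g := fun v : ℝ => Real.exp (-2 * x) * Real.exp (-x * v ^ 2)
  have hg_int : IntegrableOn g (Set.Ioi 0) := by
    apply Integrable.const_mul
    exact (integrableOn_Ioi_exp_neg_mul_sq_iff.mpr hx)
  have hle : ∀ v : ℝ, 0 < v → f v < g v := by
    intro v hv
    simp only [f, g]
    rw [← Real.exp_add]
    apply Real.exp_lt_exp.mpr
    have := quad_lt_cosh hv
    nlinarith
  have hle' : ∀ v ∈ Set.Ioi (0:ℝ), f v ≤ g v := fun v hv => (hle v hv).le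
  have hf_int : IntegrableOn f (Set.Ioi 0) := by
    apply Integrable.mono' hg_int
    · exact (Real.continuous_exp.comp (by fun_prop)).aestronglyMeasurable
    · filter_upwards [ae_restrict_mem measurableSet_Ioi] with v hv
      simp only [f, Real.norm_eq_abs, Real.abs_exp]
      exact hle' v hv
  have key : (∫ v in Set.Ioi (0:ℝ), f v) < ∫ v in Set.Ioi (0:ℝ), g v := by
    have hpos : 0 < ∫ v in Set.Ioi (0:ℝ), (g v - f v) := by
      rw [setIntegral_pos_iff_support_of_nonneg_ae]
      · have hsub : Set.Ioi (0:ℝ) ⊆ Function.support (fun v => g v - f v) := by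
          intro v hv
          exact sub_ne_zero.mpr (hle v hv).ne'
        rw [Set.inter_eq_self_of_subset_right hsub]
        simp [Real.volume_Ioi]
      · filter_upwards [ae_restrict_mem measurableSet_Ioi] with v hv
        exact sub_nonneg.mpr (hle' v hv)
      · exact hg_int.sub hf_int
    have := integral_sub hg_int hf_int
    simp only [f, g] at this ⊢
    linarith [hpos, this ▸ hpos]
  calc (∫ v in Set.Ioi (0:ℝ), f v) < ∫ v in Set.Ioi (0:ℝ), g v := key
    _ = Real.sqrt (π / (4 * x)) * Real.exp (-2 * x) := by
        rw [integral_const_mul, integral_gaussian_Ioi]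
        rw [mul_comm]
        congr 1
        rw [show π / (4 * x) = (π / x) * (1/2)^2 by ring,
          Real.sqrt_mul (by positivity), Real.sqrt_sq (by norm_num)]
        ring
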